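/- Let R be a commutative integral domain with fraction field K. Let P ∈ K^{n×m} and suppose C_s ∈ K^{m×n} stabilizes P and C₀ ∈ K^{m×n} stabilizes P₀ = P(I - C_sP)⁻¹. Then (I - (C_s+C₀)P)⁻¹ C_s = (I - C_sP)⁻¹C_s + (I - C_sP)⁻¹ C₀ (I - P₀C₀)⁻¹ P₀ C_s, and in particular (I - (C_s+C₀)P)⁻¹C_s has all entries in R. -/
import Mathlib


open Matrix

/-- A matrix over the fraction field is *stable* if all its entries lie in `R`. -/
def MatStable (R : Type*) [CommRing R] [IsDomain R] {α β : Type*}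
    (M : Matrix α β (FractionRing R)) : Prop :=
  ∀ i j, ∃ r : R, algebraMap R (FractionRing R) r = M i j

lemma matStable_iff (R : Type*) [CommRing R] [IsDomain R] {α β : Type*}
    (M : Matrix α β (FractionRing R)) :
    MatStable R M ↔ ∀ i j, M i j ∈ (algebraMap R (FractionRing R)).range := by
  simp only [MatStable, RingHom.mem_range]

lemma MatStable.mul' (R : Type*) [CommRing R] [IsDomain R] {α β γ : Type*} [Fintype β]
    {M : Matrix α β (FractionRing R)} {N : Matrix β γ (FractionRing R)}
    (hM : MatStable R M) (hN : MatStable R N) : MatStable R (M * N) := by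
  rw [matStable_iff] at *
  intro i j
  rw [Matrix.mul_apply]
  exact Subring.sum_mem _ fun k _ => mul_mem (hM i k) (hN k j)

lemma MatStable.add' (R : Type*) [CommRing R] [IsDomain R] {α β : Type*}
    {M N : Matrix α β (FractionRing R)}
    (hM : MatStable R M) (hN : MatStable R N) : MatStable R (M + N) := by
  rw [matStable_iff] at *
  exact fun i j => add_mem (hM i j) (hN i j)

lemma MatStable.sub' (R : Type*) [CommRing R] [IsDomain R] {α β : Type*}
    {M N : Matrix α β (FractionRing R)}
    (hM : MatStable R M) (hN : MatStable R N) : MatStable R (M - N) := by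
  rw [matStable_iff] at *
  exact fun i j => sub_mem (hM i j) (hN i j)

lemma MatStable.one' (R : Type*) [CommRing R] [IsDomain R] {α : Type*} [DecidableEq α] :
    MatStable R (1 : Matrix α α (FractionRing R)) := by
  rw [matStable_iff]
  intro i j
  by_cases h : i = j
  · subst h; rw [Matrix.one_apply_eq]; exact one_mem _
  · rw [Matrix.one_apply_ne h]; exact zero_mem _

set_option maxHeartbeats 1000000 in
theorem stmt11 (R : Type*) [CommRing R] [IsDomain R] (n m : ℕ)
    (P : Matrix (Fin n) (Fin m) (FractionRing R))
    (Cs C₀ : Matrix (Fin m) (Fin n) (FractionRing R))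
    (P₀ : Matrix (Fin n) (Fin m) (FractionRing R))
    (hP₀ : P₀ = P * (1 - Cs * P)⁻¹)
    (hd1 : (1 - P * Cs).det ≠ 0) (hd2 : (1 - Cs * P).det ≠ 0)
    (hd3 : (1 - P₀ * C₀).det ≠ 0) (hd4 : (1 - C₀ * P₀).det ≠ 0)
    (hd5 : (1 - (Cs + C₀) * P).det ≠ 0)
    (hs1 : MatStable R (1 - P * Cs)⁻¹) (hs2 : MatStable R ((1 - P * Cs)⁻¹ * P))
    (hs3 : MatStable R (Cs * (1 - P * Cs)⁻¹)) (hs4 : MatStable R (1 - Cs * P)⁻¹)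
    (ht1 : MatStable R (1 - P₀ * C₀)⁻¹) (ht2 : MatStable R ((1 - P₀ * C₀)⁻¹ * P₀))
    (ht3 : MatStable R (C₀ * (1 - P₀ * C₀)⁻¹)) (ht4 : MatStable R (1 - C₀ * P₀)⁻¹) :
    (1 - (Cs + C₀) * P)⁻¹ * Cs =
        (1 - Cs * P)⁻¹ * Cs + (1 - Cs * P)⁻¹ * C₀ * (1 - P₀ * C₀)⁻¹ * P₀ * Cs ∧
      MatStable R ((1 - (Cs + C₀) * P)⁻¹ * Cs) := by
  have hu1 : IsUnit (1 - P * Cs).det := isUnit_iff_ne_zero.mpr hd1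
  have hu2 : IsUnit (1 - Cs * P).det := isUnit_iff_ne_zero.mpr hd2
  have hu3 : IsUnit (1 - P₀ * C₀).det := isUnit_iff_ne_zero.mpr hd3
  -- key factorization
  have h0 : (1 - C₀ * P₀) * (1 - Cs * P) = 1 - (Cs + C₀) * P := by
    rw [Matrix.sub_mul, Matrix.one_mul, hP₀, Matrix.mul_assoc C₀, Matrix.mul_assoc P,
      Matrix.nonsing_inv_mul _ hu2, Matrix.mul_one, Matrix.add_mul]
    abel
  -- (1 - C₀P₀)⁻¹ = 1 + C₀(1-P₀C₀)⁻¹P₀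
  have h1 : (1 - C₀ * P₀)⁻¹ = 1 + C₀ * (1 - P₀ * C₀)⁻¹ * P₀ := by
    apply Matrix.inv_eq_right_inv
    have swap1 : (1 - C₀ * P₀) * C₀ = C₀ * (1 - P₀ * C₀) := by
      rw [Matrix.sub_mul, Matrix.mul_sub, Matrix.one_mul, Matrix.mul_one, Matrix.mul_assoc]
    have e1 : (1 - C₀ * P₀) * (C₀ * (1 - P₀ * C₀)⁻¹ * P₀) = C₀ * P₀ := by
      rw [← Matrix.mul_assoc, ← Matrix.mul_assoc, swap1, Matrix.mul_assoc C₀,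
        Matrix.mul_nonsing_inv _ hu3, Matrix.mul_one]
    rw [Matrix.mul_add, Matrix.mul_one, e1]
    abel
  -- push-through identity
  have swap2 : (1 - Cs * P) * Cs = Cs * (1 - P * Cs) := by
    rw [Matrix.sub_mul, Matrix.mul_sub, Matrix.one_mul, Matrix.mul_one, Matrix.mul_assoc]
  have hpush : (1 - Cs * P)⁻¹ * Cs = Cs * (1 - P * Cs)⁻¹ := by
    calc (1 - Cs * P)⁻¹ * Cs
        = (1 - Cs * P)⁻¹ * (Cs * ((1 - P * Cs) * (1 - P * Cs)⁻¹)) := by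
          rw [Matrix.mul_nonsing_inv _ hu1, Matrix.mul_one]
      _ = (1 - Cs * P)⁻¹ * (1 - Cs * P) * (Cs * (1 - P * Cs)⁻¹) := by
          rw [← Matrix.mul_assoc Cs, ← swap2]
          simp only [Matrix.mul_assoc]
      _ = Cs * (1 - P * Cs)⁻¹ := by
          rw [Matrix.nonsing_inv_mul _ hu2, Matrix.one_mul]
  have hP₀Cs : P₀ * Cs = (1 - P * Cs)⁻¹ - 1 := by
    rw [hP₀, Matrix.mul_assoc, hpush, ← Matrix.mul_assoc]
    calc P * Cs * (1 - P * Cs)⁻¹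
        = (1 : Matrix (Fin n) (Fin n) (FractionRing R)) * (1 - P * Cs)⁻¹
            - (1 - P * Cs) * (1 - P * Cs)⁻¹ := by
          rw [← Matrix.sub_mul]
          congr 1
          abel
      _ = (1 - P * Cs)⁻¹ - 1 := by
          rw [Matrix.one_mul, Matrix.mul_nonsing_inv _ hu1]
  have hmain : (1 - (Cs + C₀) * P)⁻¹ * Cs =
      (1 - Cs * P)⁻¹ * Cs + (1 - Cs * P)⁻¹ * C₀ * (1 - P₀ * C₀)⁻¹ * P₀ * Cs := by
    rw [← h0, Matrix.mul_inv_rev, h1, Matrix.mul_add, Matrix.mul_one, Matrix.add_mul]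
    simp only [Matrix.mul_assoc]
  refine ⟨hmain, ?_⟩
  rw [hmain]
  have hterm2 : (1 - Cs * P)⁻¹ * C₀ * (1 - P₀ * C₀)⁻¹ * P₀ * Cs =
      (1 - Cs * P)⁻¹ * ((C₀ * (1 - P₀ * C₀)⁻¹) * ((1 - P * Cs)⁻¹ - 1)) := by
    rw [← hP₀Cs]
    simp only [Matrix.mul_assoc]
  rw [hpush, hterm2]
  exact MatStable.add' R hs3
    (MatStable.mul' R hs4 (MatStable.mul' R ht3 (MatStable.sub' R hs1 (MatStable.one' R))))
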